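/- arXiv:2101.11264 — 6 statements merged into one kernel-verified Lean document; each statement's English description precedes it below -/
import Mathlib

section
/- Fix an integer m ≥ 1. Define A_0 := Σ_{i=1}^n (x_i + y_i)^m ∈ R and, recursively, A_k := Φ^{k+1}(A_{k−1}) − (k+1)^k · A_{k−1} for 1 ≤ k ≤ m−1. Then for every 0 ≤ k ≤ m−1 one has A_k − Σ_{j=k+1}^m C(m,j) · (Π_{l=2}^{k+1} (l^j − l^{l−1})) · P_{m−j,j} ∈ J, where C(m,j) is the binomial coefficient and the product over an empty range equals 1. In particular, A_{m−1} − (Π_{k=2}^m (k^m − k^{k−1})) · P_{0,m} ∈ J. -/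
open MvPolynomial

/-- `P n a b = ∑ i, x_i^a * y_i^b` in `R = ℝ[x_1,…,x_n,y_1,…,y_n]`,
where `x_i = X (Sum.inl i)` and `y_i = X (Sum.inr i)`. -/
noncomputable def P (n : ℕ) (a b : ℕ) : MvPolynomial (Fin n ⊕ Fin n) ℝ :=
  ∑ i : Fin n, X (Sum.inl i) ^ a * X (Sum.inr i) ^ b

/-- The `k`-th power map `Φ^k : R → R`, the ℝ-algebra endomorphism with
`Φ^k(x_i) = x_i` and `Φ^k(y_i) = k·y_i`. -/
noncomputable def Φ (n : ℕ) (k : ℤ) :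
    MvPolynomial (Fin n ⊕ Fin n) ℝ →ₐ[ℝ] MvPolynomial (Fin n ⊕ Fin n) ℝ :=
  aeval (Sum.elim (fun i => X (Sum.inl i)) (fun i => C (k : ℝ) * X (Sum.inr i)))

/-- The ideal `J` generated by the positive-degree symmetric polynomials in the
variables `x_1,…,x_n` alone. -/
noncomputable def Jx (n : ℕ) : Ideal (MvPolynomial (Fin n ⊕ Fin n) ℝ) :=
  Ideal.span
    {f | ∃ g : MvPolynomial (Fin n) ℝ, g.IsSymmetric ∧ 0 < g.totalDegree ∧
      f = rename Sum.inl g}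

lemma Phi_P (n : ℕ) (c : ℤ) (a b : ℕ) :
    Φ n c (P n a b) = ((c : ℝ) ^ b) • P n a b := by
  simp only [Φ, P, map_sum, map_mul, map_pow, aeval_X, Sum.elim_inl, Sum.elim_inr,
    Finset.smul_sum]
  refine Finset.sum_congr rfl fun i _ => ?_
  rw [smul_eq_C_mul, mul_pow, ← C_pow]
  ring

lemma Phi_rename (n : ℕ) (c : ℤ) (g : MvPolynomial (Fin n) ℝ) :
    Φ n c (rename Sum.inl g) = rename Sum.inl g := by
  show aeval _ (rename Sum.inl g) = _
  rw [aeval_rename, Sum.elim_comp_inl]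
  induction g using MvPolynomial.induction_on <;> simp_all

lemma Phi_mem_Jx (n : ℕ) (c : ℤ) {f : MvPolynomial (Fin n ⊕ Fin n) ℝ}
    (hf : f ∈ Jx n) : Φ n c f ∈ Jx n := by
  refine Submodule.span_induction ?_ ?_ ?_ ?_ hf
  · rintro x ⟨g, hg, hd, rfl⟩
    rw [Phi_rename]
    exact Ideal.subset_span ⟨g, hg, hd, rfl⟩
  · simp
  · intro x y _ _ hx hy
    rw [map_add]; exact add_mem hx hy
  · intro r x _ hx
    rw [smul_eq_mul, map_mul]
    exact Ideal.mul_mem_left _ _ hx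

lemma P_mem_Jx (n : ℕ) (hn : 1 ≤ n) (a : ℕ) (ha : 1 ≤ a) : P n a 0 ∈ Jx n := by
  apply Ideal.subset_span
  refine ⟨psum (Fin n) ℝ a, psum_isSymmetric _ _ _, ?_, ?_⟩
  · set i0 : Fin n := ⟨0, hn⟩
    have hcoeff : coeff (Finsupp.single i0 a) (psum (Fin n) ℝ a) = 1 := by
      simp only [psum, coeff_sum, X_pow_eq_monomial, coeff_monomial]
      rw [Finset.sum_eq_single i0]
      · simp
      · intro i _ hi
        rw [if_neg]
        intro h
        exact hi ((Finsupp.single_left_injective (by omega)).eq_iff.mp h ▸ rfl)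
      · simp
    have hsupp : Finsupp.single i0 a ∈ (psum (Fin n) ℝ a).support := by
      rw [mem_support_iff, hcoeff]; exact one_ne_zero
    have := le_totalDegree hsupp
    simp [Finsupp.sum_single_index] at this
    omega
  · simp [P, psum, map_sum, map_pow]

lemma A0_eq (n m : ℕ) :
    (∑ i : Fin n, (X (Sum.inl i) + X (Sum.inr i) : MvPolynomial (Fin n ⊕ Fin n) ℝ) ^ m)
    = ∑ j ∈ Finset.range (m + 1), (m.choose j : ℝ) • P n (m - j) j := by
  have h1 : ∀ i : Fin n, (X (Sum.inl i) + X (Sum.inr i) : MvPolynomial (Fin n ⊕ Fin n) ℝ) ^ m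
      = ∑ j ∈ Finset.range (m + 1),
          (m.choose j : ℝ) • (X (Sum.inl i) ^ (m - j) * X (Sum.inr i) ^ j) := by
    intro i
    rw [add_pow, ← Finset.sum_range_reflect]
    refine Finset.sum_congr rfl fun j hj => ?_
    have hj' : j ≤ m := by
      have := Finset.mem_range.mp hj; omega
    have h2 : m + 1 - 1 - j = m - j := by omega
    have h3 : m - (m - j) = j := by omega
    rw [h2, h3, Nat.choose_symm hj', smul_eq_C_mul, map_natCast C]
    ring
  simp_rw [h1]
  rw [Finset.sum_comm]
  refine Finset.sum_congr rfl fun j _ => ?_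
  rw [P, Finset.smul_sum]

/-- for `A_0 = ∑ (x_i + y_i)^m` and
`A_k = Φ^{k+1}(A_{k-1}) − (k+1)^k · A_{k-1}` (for `1 ≤ k ≤ m−1`), we have
`A_k − ∑_{j=k+1}^m C(m,j)·(∏_{l=2}^{k+1} (l^j − l^{l−1}))·P_{m−j,j} ∈ J`
for all `0 ≤ k ≤ m−1`; in particular
`A_{m−1} − (∏_{k=2}^m (k^m − k^{k−1}))·P_{0,m} ∈ J`. -/
theorem stmt2 (n : ℕ) (hn : 1 ≤ n) (m : ℕ) (hm : 1 ≤ m)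
    (A : ℕ → MvPolynomial (Fin n ⊕ Fin n) ℝ)
    (hA0 : A 0 = ∑ i : Fin n, (X (Sum.inl i) + X (Sum.inr i)) ^ m)
    (hArec : ∀ k : ℕ, 1 ≤ k → k ≤ m - 1 →
      A k = Φ n ((k : ℤ) + 1) (A (k - 1)) - (((k : ℝ) + 1) ^ k) • A (k - 1)) :
    (∀ k : ℕ, k ≤ m - 1 →
      A k - ∑ j ∈ Finset.Icc (k + 1) m,
        ((m.choose j : ℝ) * ∏ l ∈ Finset.Icc 2 (k + 1), ((l : ℝ) ^ j - (l : ℝ) ^ (l - 1))) •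
          P n (m - j) j ∈ Jx n) ∧
    A (m - 1) - (∏ k ∈ Finset.Icc 2 m, ((k : ℝ) ^ m - (k : ℝ) ^ (k - 1))) • P n 0 m ∈ Jx n := by
  have main : ∀ k : ℕ, k ≤ m - 1 →
      A k - ∑ j ∈ Finset.Icc (k + 1) m,
        ((m.choose j : ℝ) * ∏ l ∈ Finset.Icc 2 (k + 1), ((l : ℝ) ^ j - (l : ℝ) ^ (l - 1))) •
          P n (m - j) j ∈ Jx n := by
    intro k
    induction k with
    | zero =>
      intro _
      rw [hA0, A0_eq]
      have h0 : Finset.Icc 2 (0 + 1) = (∅ : Finset ℕ) := by decide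
      simp only [zero_add, h0, Finset.prod_empty, mul_one]
      have hr : Finset.range (m + 1) = insert 0 (Finset.Icc 1 m) := by
        ext j; simp; omega
      rw [hr, Finset.sum_insert (by simp), add_sub_cancel_right]
      simp only [Nat.choose_zero_right, Nat.cast_one, one_smul, Nat.sub_zero]
      exact P_mem_Jx n hn m hm
    | succ k ih =>
      intro hk1
      have hD := ih (by omega)
      have hrec := hArec (k + 1) (by omega) hk1
      simp only [Nat.add_sub_cancel] at hrec
      set c : ℤ := ((k + 1 : ℕ) : ℤ) + 1 with hc
      set r : ℝ := ((k + 1 : ℕ) : ℝ) + 1 with hrdef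
      have hcr : ((c : ℝ)) = r := by rw [hc, hrdef]; push_cast; ring
      set Sk := ∑ j ∈ Finset.Icc (k + 1) m,
        ((m.choose j : ℝ) * ∏ l ∈ Finset.Icc 2 (k + 1), ((l : ℝ) ^ j - (l : ℝ) ^ (l - 1))) •
          P n (m - j) j with hSk
      set Sk1 := ∑ j ∈ Finset.Icc (k + 1 + 1) m,
        ((m.choose j : ℝ) * ∏ l ∈ Finset.Icc 2 (k + 1 + 1), ((l : ℝ) ^ j - (l : ℝ) ^ (l - 1))) •
          P n (m - j) j with hSk1
      have key : Φ n c Sk - (r ^ (k + 1)) • Sk = Sk1 := by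
        rw [hSk, map_sum, Finset.smul_sum, ← Finset.sum_sub_distrib]
        have hstep : ∀ j : ℕ,
            Φ n c (((m.choose j : ℝ) * ∏ l ∈ Finset.Icc 2 (k + 1),
                ((l : ℝ) ^ j - (l : ℝ) ^ (l - 1))) • P n (m - j) j)
              - (r ^ (k + 1)) • (((m.choose j : ℝ) * ∏ l ∈ Finset.Icc 2 (k + 1),
                ((l : ℝ) ^ j - (l : ℝ) ^ (l - 1))) • P n (m - j) j)
            = (((m.choose j : ℝ) * ∏ l ∈ Finset.Icc 2 (k + 1),
                ((l : ℝ) ^ j - (l : ℝ) ^ (l - 1))) * (r ^ j - r ^ (k + 1))) •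
                P n (m - j) j := by
          intro j
          rw [map_smul, Phi_P, hcr, smul_smul, smul_smul, ← sub_smul]
          congr 1
          ring
        simp only [hstep]
        have hins : Finset.Icc (k + 1) m = insert (k + 1) (Finset.Icc (k + 1 + 1) m) := by
          ext j; simp; omega
        rw [hins, Finset.sum_insert (by simp), sub_self, mul_zero, zero_smul, zero_add, hSk1]
        refine Finset.sum_congr rfl fun j hj => ?_
        congr 1
        rw [Finset.prod_Icc_succ_top (by omega : 2 ≤ k + 1 + 1)]
        have he : k + 1 + 1 - 1 = k + 1 := rfl
        rw [he, hrdef]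
        push_cast
        ring
      have heq : A (k + 1) - Sk1 = Φ n c (A k - Sk) - (r ^ (k + 1)) • (A k - Sk) := by
        rw [hrec, ← key, map_sub, smul_sub]
        ring
      rw [heq]
      refine sub_mem (Phi_mem_Jx n c hD) ?_
      rw [smul_eq_C_mul]
      exact Ideal.mul_mem_left _ _ hD
  refine ⟨main, ?_⟩
  have h := main (m - 1) le_rfl
  have hm1 : m - 1 + 1 = m := Nat.sub_add_cancel hm
  rw [hm1, Finset.Icc_self, Finset.sum_singleton] at h
  simpa [Nat.choose_self, Nat.sub_self] using h
end

section
/- For all integers a, b ≥ 0 with 1 ≤ a + b ≤ n, the polynomial P_{a,b} lies in 𝒮 + J; that is, there exist s ∈ 𝒮 and h ∈ J with P_{a,b} = s + h. -/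
open MvPolynomial

/-- `ι : ℝ[z_1,…,z_n] → R`, `z_i ↦ x_i + y_i`. -/
noncomputable def ι (n : ℕ) :
    MvPolynomial (Fin n) ℝ →ₐ[ℝ] MvPolynomial (Fin n ⊕ Fin n) ℝ :=
  aeval (fun i => X (Sum.inl i) + X (Sum.inr i))

/-- The subalgebra `𝒮` generated by `Φ^k(q(x_1+y_1,…,x_n+y_n))` for `k ∈ ℤ \ {0}`
and `q` a symmetric polynomial. -/
noncomputable def Scal (n : ℕ) : Subalgebra ℝ (MvPolynomial (Fin n ⊕ Fin n) ℝ) :=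
  Algebra.adjoin ℝ
    {f | ∃ k : ℤ, k ≠ 0 ∧ ∃ q : MvPolynomial (Fin n) ℝ, q.IsSymmetric ∧ f = Φ n k (ι n q)}

lemma key (n m : ℕ) (k : ℤ) :
    Φ n k (ι n (psum (Fin n) ℝ m)) =
      ∑ j ∈ Finset.range (m+1), ((m.choose j : ℝ) * (k:ℝ)^j) • P n (m-j) j := by
  rw [psum, map_sum, map_sum]
  have h : ∀ i : Fin n, (Φ n k) ((ι n) (X i ^ m)) =
      ∑ j ∈ Finset.range (m+1),
        (C ((k:ℝ)))^j * X (Sum.inr i)^j * X (Sum.inl i)^(m-j) *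
          (m.choose j : MvPolynomial (Fin n ⊕ Fin n) ℝ) := by
    intro i
    have : (Φ n k) ((ι n) (X i ^ m)) =
        (C ((k:ℝ)) * X (Sum.inr i) + X (Sum.inl i)) ^ m := by
      simp [Φ, ι, add_comm]
    rw [this, add_pow]
    exact Finset.sum_congr rfl fun j hj => by ring
  simp_rw [h]
  rw [Finset.sum_comm]
  refine Finset.sum_congr rfl fun j hj => ?_
  rw [P, Finset.smul_sum]
  refine Finset.sum_congr rfl fun i _ => ?_
  rw [smul_eq_C_mul, map_mul, map_pow, ← C_eq_coe_nat]; ring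


/-- for `1 ≤ a + b ≤ n`, `P_{a,b} ∈ 𝒮 + J`. -/
theorem stmt3 (n : ℕ) (hn : 1 ≤ n) (a b : ℕ) (hab1 : 1 ≤ a + b) (hab2 : a + b ≤ n) :
    ∃ s ∈ Scal n, ∃ h ∈ Jx n, P n a b = s + h := by
  by_cases hb : b = 0
  · subst hb
    refine ⟨0, zero_mem _, P n a 0, ?_, by rw [zero_add]⟩
    refine Ideal.subset_span ⟨psum (Fin n) ℝ a, psum_isSymmetric _ _ a, ?_, ?_⟩
    · have hmem : Finsupp.single (⟨0, hn⟩ : Fin n) a ∈ (psum (Fin n) ℝ a).support := by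
        rw [mem_support_iff, psum, coeff_sum]
        have : ∀ i : Fin n,
            coeff (Finsupp.single (⟨0, hn⟩ : Fin n) a) (X i ^ a : MvPolynomial (Fin n) ℝ)
              = if i = ⟨0, hn⟩ then 1 else 0 := by
          intro i
          rw [X_pow_eq_monomial, coeff_monomial]
          split_ifs with h1 h2 h2
          · rfl
          · exact absurd (Finsupp.single_left_injective (by omega : a ≠ 0) h1) h2
          · exact absurd (by rw [h2]) h1
          · rfl
        simp only [this, Finset.sum_ite_eq', Finset.mem_univ, if_true]
        norm_num
      have := le_totalDegree hmem
      simp [Finsupp.sum_single_index] at this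
      omega
    · rw [P, psum, map_sum]
      exact Finset.sum_congr rfl fun i _ => by simp
  · -- b ≥ 1 : show P n a b ∈ Scal n
    set m := a + b with hm
    have hbm : b ≤ m := by omega
    set A : Matrix (Fin (m+1)) (Fin (m+1)) ℝ :=
      Matrix.vandermonde (fun i => (i : ℝ) + 1) with hA
    have hdet : IsUnit A.det := by
      rw [isUnit_iff_ne_zero, hA, Matrix.det_vandermonde_ne_zero_iff]
      intro i j hij
      have : ((i : ℕ) : ℝ) = ((j : ℕ) : ℝ) := by dsimp at hij; linarith
      exact Fin.ext (by exact_mod_cast this)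
    set w : Fin (m+1) → MvPolynomial (Fin n ⊕ Fin n) ℝ :=
      fun j => ((m.choose j : ℝ)) • P n (m - j) j with hwdef
    set v : Fin (m+1) → MvPolynomial (Fin n ⊕ Fin n) ℝ :=
      fun i => Φ n ((i : ℕ) + 1) (ι n (psum (Fin n) ℝ m)) with hvdef
    have hv : ∀ i, v i = ∑ j : Fin (m+1), A i j • w j := by
      intro i
      show Φ n ((i : ℕ) + 1) (ι n (psum (Fin n) ℝ m)) = _
      rw [key n m ((i : ℕ) + 1)]
      rw [← Fin.sum_univ_eq_sum_range
        (fun j => ((m.choose j : ℝ) * ((((i : ℕ) + 1 : ℤ)) : ℝ)^j) • P n (m-j) j) (m+1)]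
      refine Finset.sum_congr rfl fun j _ => ?_
      rw [hA, hwdef, smul_smul, Matrix.vandermonde]
      simp only [Matrix.of_apply]
      push_cast
      ring_nf
    have hw : ∀ j, w j = ∑ i, (A⁻¹ j i) • v i := by
      intro j
      have : ∑ i, (A⁻¹ j i) • v i
          = ∑ j' : Fin (m+1), ((A⁻¹ * A) j j') • w j' := by
        simp_rw [hv, Finset.smul_sum, smul_smul]
        rw [Finset.sum_comm]
        refine Finset.sum_congr rfl fun j' _ => ?_
        rw [Matrix.mul_apply, Finset.sum_smul]
      rw [this, Matrix.nonsing_inv_mul A hdet]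
      simp [Matrix.one_apply]
    have hvmem : ∀ i, v i ∈ Scal n := by
      intro i
      exact Algebra.subset_adjoin
        ⟨(i : ℕ) + 1, by omega, psum (Fin n) ℝ m, psum_isSymmetric _ _ m, rfl⟩
    have hwmem : ∀ j, w j ∈ Scal n := by
      intro j
      rw [hw]
      exact sum_mem (fun i _ => Subalgebra.smul_mem _ (hvmem i) _)
    have hPw : P n a b = ((m.choose b : ℝ))⁻¹ • w ⟨b, by omega⟩ := by
      rw [hwdef]
      simp only
      rw [smul_smul, inv_mul_cancel₀
        (by exact_mod_cast (Nat.choose_pos hbm).ne' : (m.choose b : ℝ) ≠ 0), one_smul]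
      congr 1
      omega
    refine ⟨P n a b, ?_, 0, zero_mem _, by rw [add_zero]⟩
    rw [hPw]
    exact Subalgebra.smul_mem _ (hwmem _) _
end

section
/- Every polynomial f ∈ R that is invariant under the diagonal S_n-action lies in 𝒮 + J; that is, there exist s ∈ 𝒮 and h ∈ J with f = s + h. (This is the algebraic form of the theorem that H*(B_com U(n); ℝ) ≅ (ℝ[x_1,…,x_n] ⊗ ℝ[y_1,…,y_n])^{S_n}/J is generated as an ℝ-algebra by the sets Φ^k(Im ι), k ∈ ℤ \ {0}, where ι : H*(BU(n);ℝ) → H*(B_com U(n);ℝ) is induced by z_i ↦ x_i + y_i.) -/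
open MvPolynomial

namespace Stmt4Aux

open Finset

/-- Polarized power sum `∑ i, x_i^a y_i^b`. -/
noncomputable def pxy (n : ℕ) (v : ℕ × ℕ) : MvPolynomial (Fin n ⊕ Fin n) ℝ :=
  ∑ i : Fin n, X (Sum.inl i) ^ v.1 * X (Sum.inr i) ^ v.2

/-- Power sum in `n` variables. -/
noncomputable def psumn (n m : ℕ) : MvPolynomial (Fin n) ℝ := ∑ i : Fin n, X i ^ m

lemma psumn_symm (n m : ℕ) : (psumn n m).IsSymmetric := by
  intro σ
  simp only [psumn, map_sum, map_pow, rename_X]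
  exact Fintype.sum_equiv σ _ _ (fun i => rfl)

/-- The sum `Scal n + Jx n` as a subalgebra. -/
noncomputable def Tsub (n : ℕ) : Subalgebra ℝ (MvPolynomial (Fin n ⊕ Fin n) ℝ) where
  carrier := {f | ∃ s ∈ Scal n, ∃ h ∈ Jx n, f = s + h}
  mul_mem' := by
    rintro a b ⟨s, hs, h, hh, rfl⟩ ⟨s', hs', h', hh', rfl⟩
    exact ⟨s * s', mul_mem hs hs', s * h' + h * s' + h * h',
      add_mem (add_mem (Ideal.mul_mem_left _ _ hh') (Ideal.mul_mem_right _ _ hh))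
        (Ideal.mul_mem_right _ _ hh), by ring⟩
  add_mem' := by
    rintro a b ⟨s, hs, h, hh, rfl⟩ ⟨s', hs', h', hh', rfl⟩
    exact ⟨s + s', add_mem hs hs', h + h', add_mem hh hh', by ring⟩
  algebraMap_mem' := fun r =>
    ⟨algebraMap ℝ _ r, Subalgebra.algebraMap_mem _ r, 0, zero_mem _, (add_zero _).symm⟩

/-! ### `pxy` with positive `y`-degree lies in `Scal` -/

lemma key_expand (n : ℕ) (m : ℕ) (k : ℤ) :
    Φ n k (ι n (psumn n m)) =
      ∑ j ∈ Finset.range (m + 1),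
        ((k : ℝ) ^ j) • ((m.choose j : ℝ) • pxy n (m - j, j)) := by
  have h1 : Φ n k (ι n (psumn n m)) =
      ∑ i : Fin n, (X (Sum.inl i) + C (k : ℝ) * X (Sum.inr i)) ^ m := by
    simp [psumn, Φ, ι, map_sum]
  rw [h1]
  have h2 : ∀ i : Fin n, (X (Sum.inl i) + C (k : ℝ) * X (Sum.inr i)) ^ m =
      ∑ j ∈ Finset.range (m + 1),
        ((k : ℝ) ^ j) • ((m.choose j : ℝ) •
          (X (Sum.inl i) ^ (m - j) * X (Sum.inr i) ^ j)) := by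
    intro i
    rw [add_pow]
    rw [← Finset.sum_range_reflect]
    refine Finset.sum_congr rfl fun j hj => ?_
    have hjm : j ≤ m := Nat.lt_succ_iff.mp (Finset.mem_range.mp hj)
    have e1 : m + 1 - 1 - j = m - j := by omega
    have e2 : m - (m - j) = j := by omega
    rw [e1, e2, Nat.choose_symm hjm, smul_smul, smul_eq_C_mul, mul_pow, ← C_pow,
      ← C_eq_coe_nat, C_mul]
    ring
  rw [Finset.sum_congr rfl fun i _ => h2 i, Finset.sum_comm]
  refine Finset.sum_congr rfl fun j _ => ?_
  simp only [pxy, Finset.smul_sum]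

/-- Vandermonde / Lagrange interpolation: coordinates are in the span of moment vectors. -/
lemma span_coords {M : Type*} [AddCommGroup M] [Module ℝ M] (m : ℕ) (u : ℕ → M)
    (w : ℤ → M) (hw : ∀ k : ℤ, w k = ∑ j ∈ Finset.range (m + 1), ((k : ℝ) ^ j) • u j)
    {j : ℕ} (hj : j ≤ m) :
    ∃ c : ℕ → ℝ, u j = ∑ k ∈ Finset.range (m + 1), c k • w ((k : ℤ) + 1) := by
  set s : Finset ℕ := Finset.range (m + 1) with hs
  set v : ℕ → ℝ := fun k => (k : ℝ) + 1 with hv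
  have hvinj : Set.InjOn v s := by
    intro a _ b _ h
    have : (a : ℝ) = b := by simpa [hv] using h
    exact_mod_cast this
  have hcard : #s = m + 1 := Finset.card_range _
  set c : ℕ → ℝ := fun k => (Lagrange.basis s v k).coeff j with hc
  have hδ : ∀ j' ≤ m, (∑ k ∈ s, c k * (v k) ^ j') = if j' = j then 1 else 0 := by
    intro j' hj'
    have hdeg : (Polynomial.X ^ j' : Polynomial ℝ).degree < #s := by
      rw [Polynomial.degree_X_pow, hcard]
      exact_mod_cast Nat.lt_succ_of_le hj'
    have hint := Lagrange.eq_interpolate (f := (Polynomial.X ^ j' : Polynomial ℝ)) hvinj hdeg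
    have h2 := congrArg (fun p => Polynomial.coeff p j) hint
    simp only [Lagrange.interpolate_apply, Polynomial.finset_sum_coeff,
      Polynomial.coeff_C_mul, Polynomial.eval_pow, Polynomial.eval_X,
      Polynomial.coeff_X_pow] at h2
    rw [show (if j' = j then (1:ℝ) else 0) = if j = j' then 1 else 0 by
      by_cases h : j = j' <;> simp [h, Ne.symm, eq_comm]]
    rw [h2]
    exact Finset.sum_congr rfl fun k _ => by rw [hc]; ring
  refine ⟨c, ?_⟩
  have hjs : j ∈ s := Finset.mem_range.mpr (Nat.lt_succ_of_le hj)
  have step : ∑ k ∈ s, c k • w ((k : ℤ) + 1) = ∑ j' ∈ s, (∑ k ∈ s, c k * (v k) ^ j') • u j' := by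
    simp only [hw, Finset.smul_sum, smul_smul]
    rw [Finset.sum_comm]
    refine Finset.sum_congr rfl fun j' _ => ?_
    rw [Finset.sum_smul]
    refine Finset.sum_congr rfl fun k _ => ?_
    congr 2
    push_cast
    ring
  rw [step]
  have : ∀ j' ∈ s, (∑ k ∈ s, c k * (v k) ^ j') • u j' = (if j' = j then (1:ℝ) else 0) • u j' := by
    intro j' hj'
    rw [hδ j' (Nat.lt_succ_iff.mp (Finset.mem_range.mp hj'))]
  rw [Finset.sum_congr rfl this]
  simp only [ite_smul, one_smul, zero_smul, Finset.sum_ite_eq', hjs, if_true]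

lemma pxy_mem_Scal {n : ℕ} {a b : ℕ} (hb : 0 < b) : pxy n (a, b) ∈ Scal n := by
  set m := a + b with hm
  have hb' : b ≤ m := by omega
  obtain ⟨c, hc⟩ := span_coords m (fun j => (m.choose j : ℝ) • pxy n (m - j, j))
    (fun k => Φ n k (ι n (psumn n m))) (fun k => key_expand n m k) hb'
  have hma : m - b = a := by omega
  rw [hma] at hc
  have hmem : ∀ k : ℕ, Φ n ((k : ℤ) + 1) (ι n (psumn n m)) ∈ Scal n := fun k =>
    Algebra.subset_adjoin ⟨(k : ℤ) + 1, by positivity, psumn n m, psumn_symm n m, rfl⟩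
  have h1 : (m.choose b : ℝ) • pxy n (a, b) ∈ Scal n := by
    rw [hc]
    exact sum_mem fun k _ => Subalgebra.smul_mem _ (hmem k) _
  have hch : (m.choose b : ℝ) ≠ 0 :=
    Nat.cast_ne_zero.mpr (Nat.choose_pos hb').ne'
  have h2 := Subalgebra.smul_mem _ h1 ((m.choose b : ℝ)⁻¹)
  rwa [smul_smul, inv_mul_cancel₀ hch, one_smul] at h2

/-! ### sums over injections -/

/-- Sum over injections `Fin r ↪ Fin n` of the monomials with exponents `e`. -/
noncomputable def Minj (n r : ℕ) (e : Fin r → ℕ × ℕ) : MvPolynomial (Fin n ⊕ Fin n) ℝ :=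
  ∑ φ ∈ Finset.univ.filter (fun φ : Fin r → Fin n => Function.Injective φ),
    ∏ t, X (Sum.inl (φ t)) ^ (e t).1 * X (Sum.inr (φ t)) ^ (e t).2

lemma Minj_zero (n : ℕ) (e : Fin 0 → ℕ × ℕ) : Minj n 0 e = 1 := by
  rw [Minj]
  have h : ∀ φ : Fin 0 → Fin n,
      (∏ t, X (Sum.inl (φ t)) ^ (e t).1 * X (Sum.inr (φ t)) ^ (e t).2
        : MvPolynomial (Fin n ⊕ Fin n) ℝ) = 1 := fun φ => by
    simp
  rw [Finset.sum_congr rfl fun φ _ => h φ]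
  rw [Finset.sum_const, Finset.filter_true_of_mem
    (fun φ _ => Function.injective_of_subsingleton φ)]
  simp

lemma Minj_succ (n r : ℕ) (e : Fin (r + 1) → ℕ × ℕ) :
    Minj n (r + 1) e =
      Minj n r (fun t => e t.succ) * pxy n (e 0) -
        ∑ t : Fin r,
          Minj n r (Function.update (fun t => e t.succ) t
            ((e t.succ).1 + (e 0).1, (e t.succ).2 + (e 0).2)) := by
  classical
  set R := MvPolynomial (Fin n ⊕ Fin n) ℝ
  set F : (Fin (r+1) → Fin n) → R := fun φ =>
    ∏ t, X (Sum.inl (φ t)) ^ (e t).1 * X (Sum.inr (φ t)) ^ (e t).2 with hF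
  set G : (Fin r → Fin n) → R := fun ψ =>
    ∏ t, X (Sum.inl (ψ t)) ^ (e t.succ).1 * X (Sum.inr (ψ t)) ^ (e t.succ).2 with hG
  set mono : Fin n → R := fun j => X (Sum.inl j) ^ (e 0).1 * X (Sum.inr j) ^ (e 0).2 with hmono
  have hFcons : ∀ (j : Fin n) (ψ : Fin r → Fin n), F (Fin.cons j ψ) = mono j * G ψ := by
    intro j ψ
    rw [hF]
    simp only [Fin.prod_univ_succ, Fin.cons_zero, Fin.cons_succ]
    rfl
  -- step A+B: expand the sum over φ
  have stepA : Minj n (r+1) e =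
      ∑ ψ : Fin r → Fin n, ∑ j : Fin n,
        (if Function.Injective ψ then
          (if j ∈ Finset.image ψ Finset.univ then 0 else mono j * G ψ) else 0) := by
    rw [Minj, Finset.sum_filter]
    rw [← Fintype.sum_equiv (Fin.consEquiv (fun _ => Fin n))
      (fun p : Fin n × (Fin r → Fin n) =>
        if Function.Injective (Fin.cons p.1 p.2 : Fin (r+1) → Fin n)
          then F (Fin.cons p.1 p.2) else 0)
      (fun φ => if Function.Injective φ then F φ else 0) (fun p => rfl)]
    rw [Fintype.sum_prod_type]
    rw [Finset.sum_comm]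
    refine Finset.sum_congr rfl fun ψ _ => Finset.sum_congr rfl fun j _ => ?_
    rw [hFcons]
    simp only [Fin.cons_injective_iff]
    have himg : j ∈ Finset.image ψ Finset.univ ↔ j ∈ Set.range ψ := by simp
    by_cases h1 : Function.Injective ψ <;> by_cases h2 : j ∈ Set.range ψ <;>
      simp [h1, h2, himg]
  -- inner rewrite: if-sum over j
  have stepC : ∀ ψ : Fin r → Fin n, Function.Injective ψ →
      (∑ j : Fin n, (if j ∈ Finset.image ψ Finset.univ then 0 else mono j * G ψ)) =
        pxy n (e 0) * G ψ - ∑ t : Fin r, mono (ψ t) * G ψ := by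
    intro ψ hψ
    have h1 : ∀ j : Fin n, (if j ∈ Finset.image ψ Finset.univ then (0:R) else mono j * G ψ)
        = mono j * G ψ - (if j ∈ Finset.image ψ Finset.univ then mono j * G ψ else 0) := by
      intro j; split_ifs <;> simp
    rw [Finset.sum_congr rfl fun j _ => h1 j, Finset.sum_sub_distrib]
    congr 1
    · rw [← Finset.sum_mul]
      rfl
    · rw [Finset.sum_ite_mem, Finset.univ_inter,
        Finset.sum_image (fun a _ b _ h => hψ h)]
  -- the exponent update
  set e' : Fin r → Fin r → ℕ × ℕ := fun t => Function.update (fun t => e t.succ) t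
      ((e t.succ).1 + (e 0).1, (e t.succ).2 + (e 0).2) with he'
  have stepE : ∀ (t : Fin r) (ψ : Fin r → Fin n), mono (ψ t) * G ψ =
      ∏ u, X (Sum.inl (ψ u)) ^ ((e' t) u).1 * X (Sum.inr (ψ u)) ^ ((e' t) u).2 := by
    intro t ψ
    simp only [hG]
    rw [← Finset.mul_prod_erase Finset.univ _ (Finset.mem_univ t),
      ← Finset.mul_prod_erase Finset.univ
        (fun u => X (Sum.inl (ψ u)) ^ ((e' t) u).1 * X (Sum.inr (ψ u)) ^ ((e' t) u).2)
        (Finset.mem_univ t), ← mul_assoc]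
    congr 1
    · simp only [he', Function.update_self, hmono]
      rw [pow_add, pow_add]
      ring
    · refine Finset.prod_congr rfl fun u hu => ?_
      simp only [he']
      rw [Function.update_of_ne (Finset.mem_erase.mp hu).1]
  -- assemble
  rw [stepA]
  have h2 : ∀ ψ : Fin r → Fin n,
      (∑ j : Fin n, (if Function.Injective ψ then
          (if j ∈ Finset.image ψ Finset.univ then 0 else mono j * G ψ) else 0)) =
      (if Function.Injective ψ then
        pxy n (e 0) * G ψ - ∑ t : Fin r, mono (ψ t) * G ψ else 0) := by
    intro ψ
    by_cases h : Function.Injective ψ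
    · simp only [h, if_true]; exact stepC ψ h
    · simp [h]
  rw [Finset.sum_congr rfl fun ψ _ => h2 ψ]
  have h3 : ∀ ψ : Fin r → Fin n,
      (if Function.Injective ψ then
        pxy n (e 0) * G ψ - ∑ t : Fin r, mono (ψ t) * G ψ else 0) =
      pxy n (e 0) * (if Function.Injective ψ then G ψ else 0) -
        ∑ t : Fin r, (if Function.Injective ψ then mono (ψ t) * G ψ else 0) := by
    intro ψ
    split_ifs with h <;> simp [Finset.mul_sum]
  rw [Finset.sum_congr rfl fun ψ _ => h3 ψ, Finset.sum_sub_distrib]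
  congr 1
  · rw [← Finset.mul_sum, mul_comm]
    rw [Minj, Finset.sum_filter]
  · rw [Finset.sum_comm]
    refine Finset.sum_congr rfl fun t _ => ?_
    rw [Minj, Finset.sum_filter]
    exact Finset.sum_congr rfl fun ψ _ => by
      by_cases h : Function.Injective ψ <;> simp [h, stepE t ψ, he']

lemma Minj_mem (n : ℕ) : ∀ (r : ℕ) (e : Fin r → ℕ × ℕ),
    Minj n r e ∈ Algebra.adjoin ℝ (Set.range (pxy n)) := by
  intro r
  induction r with
  | zero => intro e; rw [Minj_zero]; exact one_mem _
  | succ r ih =>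
    intro e
    rw [Minj_succ]
    exact sub_mem (mul_mem (ih _) (Algebra.subset_adjoin ⟨e 0, rfl⟩))
      (sum_mem fun t _ => ih _)

/-! ### the symmetrized monomials -/

lemma symmetrized_monomial_eq (n : ℕ) (d : Fin n ⊕ Fin n →₀ ℕ) :
    (∑ σ : Equiv.Perm (Fin n),
        rename (Sum.map ⇑σ ⇑σ) (monomial d (1 : ℝ))) =
      Minj n n (fun i => (d (Sum.inl i), d (Sum.inr i))) := by
  have hmon : ∀ σ : Equiv.Perm (Fin n), rename (Sum.map ⇑σ ⇑σ) (monomial d (1:ℝ)) =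
      ∏ i : Fin n, X (Sum.inl (σ i)) ^ (d (Sum.inl i)) * X (Sum.inr (σ i)) ^ (d (Sum.inr i)) := by
    intro σ
    have h1 : (monomial d (1:ℝ)) = ∏ v : Fin n ⊕ Fin n, X v ^ d v := by
      rw [monomial_eq, C_1, one_mul, Finsupp.prod_fintype]
      intro v; exact pow_zero _
    rw [h1, map_prod]
    simp only [map_pow, rename_X, Sum.map_inl, Sum.map_inr]
    rw [Fintype.prod_sum_type, ← Finset.prod_mul_distrib]
    simp
  rw [Finset.sum_congr rfl fun σ _ => hmon σ, Minj]
  refine Finset.sum_bij' (fun (σ : Equiv.Perm (Fin n)) _ => ⇑σ)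
    (fun φ hφ => Equiv.ofBijective φ
      (Finite.injective_iff_bijective.mp (Finset.mem_filter.mp hφ).2))
    ?_ ?_ ?_ ?_ ?_
  · intro σ _
    exact Finset.mem_filter.mpr ⟨Finset.mem_univ _, σ.injective⟩
  · intro φ hφ
    exact Finset.mem_univ _
  · intro σ _
    exact Equiv.ext fun x => rfl
  · intro φ hφ
    rfl
  · intro σ _
    rfl

/-! ### pxy lies in Tsub -/

lemma pxy_mem_Tsub (n : ℕ) (hn : 1 ≤ n) (v : ℕ × ℕ) : pxy n v ∈ Tsub n := by
  obtain ⟨a, b⟩ := v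
  rcases Nat.eq_zero_or_pos b with hb | hb
  · subst hb
    rcases Nat.eq_zero_or_pos a with ha | ha
    · subst ha
      have : pxy n (0, 0) = ((n : ℕ) : MvPolynomial (Fin n ⊕ Fin n) ℝ) := by
        simp [pxy]
      rw [this]
      exact Subalgebra.natCast_mem _ n
    · -- pxy n (a,0) ∈ Jx n
      have heq : pxy n (a, 0) = rename Sum.inl (psumn n a) := by
        simp [pxy, psumn, map_sum]
      have hdeg : 0 < (psumn n a).totalDegree := by
        set i0 : Fin n := ⟨0, hn⟩
        have hcoeff : coeff (Finsupp.single i0 a) (psumn n a) = 1 := by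
          rw [psumn]
          rw [coeff_sum]
          have : ∀ i : Fin n, coeff (Finsupp.single i0 a) (X i ^ a
              : MvPolynomial (Fin n) ℝ) = if i = i0 then 1 else 0 := by
            intro i
            rw [X_pow_eq_monomial, coeff_monomial]
            congr 1
            simp only [eq_iff_iff]
            exact Finsupp.single_left_inj ha.ne'
          rw [Finset.sum_congr rfl fun i _ => this i]
          simp
        have hsupp : Finsupp.single i0 a ∈ (psumn n a).support :=
          mem_support_iff.mpr (by rw [hcoeff]; exact one_ne_zero)
        have h5 := le_totalDegree hsupp
        rw [Finsupp.sum_single_index rfl] at h5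
        omega
      exact ⟨0, zero_mem _, pxy n (a, 0),
        Ideal.subset_span ⟨psumn n a, psumn_symm n a, hdeg, heq⟩, (zero_add _).symm⟩
  · exact ⟨pxy n (a, b), pxy_mem_Scal hb, 0, zero_mem _, (add_zero _).symm⟩

theorem main (n : ℕ) (hn : 1 ≤ n) (f : MvPolynomial (Fin n ⊕ Fin n) ℝ)
    (hf : ∀ σ : Equiv.Perm (Fin n), rename (Sum.map σ σ) f = f) :
    f ∈ Tsub n := by
  classical
  have hA : Algebra.adjoin ℝ (Set.range (pxy n)) ≤ Tsub n :=
    Algebra.adjoin_le (by rintro _ ⟨v, rfl⟩; exact pxy_mem_Tsub n hn v)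
  have hNd : ∀ d : Fin n ⊕ Fin n →₀ ℕ,
      (∑ σ : Equiv.Perm (Fin n), rename (Sum.map ⇑σ ⇑σ) (monomial d (1:ℝ))) ∈ Tsub n := by
    intro d
    rw [symmetrized_monomial_eq]
    exact hA (Minj_mem n n _)
  have hsum : ∑ σ : Equiv.Perm (Fin n), rename (Sum.map ⇑σ ⇑σ) f
      = (n.factorial : ℝ) • f := by
    rw [Finset.sum_congr rfl fun σ _ => hf σ, Finset.sum_const, Finset.card_univ,
      Fintype.card_perm, Nat.cast_smul_eq_nsmul, Fintype.card_fin]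
  have hexp : ∀ σ : Equiv.Perm (Fin n), rename (Sum.map ⇑σ ⇑σ) f
      = ∑ d ∈ f.support, (coeff d f) • rename (Sum.map ⇑σ ⇑σ) (monomial d (1:ℝ)) := by
    intro σ
    conv_lhs => rw [f.as_sum]
    rw [map_sum]
    refine Finset.sum_congr rfl fun d _ => ?_
    rw [← map_smul]
    congr 1
    rw [smul_monomial, smul_eq_mul, mul_one]
  have h2 : (n.factorial : ℝ) • f = ∑ d ∈ f.support, (coeff d f) •
      ∑ σ : Equiv.Perm (Fin n), rename (Sum.map ⇑σ ⇑σ) (monomial d (1:ℝ)) := by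
    rw [← hsum, Finset.sum_congr rfl fun σ _ => hexp σ, Finset.sum_comm]
    exact Finset.sum_congr rfl fun d _ => (Finset.smul_sum).symm
  have hfact : (n.factorial : ℝ) ≠ 0 := Nat.cast_ne_zero.mpr n.factorial_ne_zero
  have h3 : f = (n.factorial : ℝ)⁻¹ • ((n.factorial : ℝ) • f) := by
    rw [smul_smul, inv_mul_cancel₀ hfact, one_smul]
  rw [h3, h2]
  exact Subalgebra.smul_mem _ (sum_mem fun d _ => Subalgebra.smul_mem _ (hNd d) _) _

end Stmt4Aux

/-- every polynomial `f ∈ R` invariant under the diagonal `S_n`-action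
(`σ·x_i = x_{σ(i)}`, `σ·y_i = y_{σ(i)}`) lies in `𝒮 + J`. -/
theorem stmt4 (n : ℕ) (hn : 1 ≤ n) (f : MvPolynomial (Fin n ⊕ Fin n) ℝ)
    (hf : ∀ σ : Equiv.Perm (Fin n), rename (Sum.map σ σ) f = f) :
    ∃ s ∈ Scal n, ∃ h ∈ Jx n, f = s + h :=
  Stmt4Aux.main n hn f hf
end

section
/- Let J̃ ⊆ R be the ideal generated by the power sums x_1^i + ⋯ + x_n^i for 1 ≤ i ≤ n together with y_1 + ⋯ + y_n. Then every polynomial f ∈ R that is invariant under the diagonal S_n-action lies in 𝒮 + J̃. (This is the algebraic form of the theorem that H*(B_com SU(n); ℝ) ≅ (ℝ[x_1,…,x_n] ⊗ ℝ[y_1,…,y_n])^{S_n}/J̃ is generated as an ℝ-algebra by the sets Φ^k(Im ι), k ∈ ℤ \ {0}.) -/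
open MvPolynomial

/-- The ideal `J̃` generated by the power sums `x_1^i + ⋯ + x_n^i` for `1 ≤ i ≤ n`
together with `y_1 + ⋯ + y_n`. -/
noncomputable def Jtilde (n : ℕ) : Ideal (MvPolynomial (Fin n ⊕ Fin n) ℝ) :=
  Ideal.span
    {f | (∃ i : ℕ, 1 ≤ i ∧ i ≤ n ∧ f = ∑ j : Fin n, X (Sum.inl j) ^ i) ∨
      f = ∑ j : Fin n, X (Sum.inr j)}

/-! ### Polarized power sums -/

noncomputable def PS (n a b : ℕ) : MvPolynomial (Fin n ⊕ Fin n) ℝ :=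
  ∑ i : Fin n, X (Sum.inl i) ^ a * X (Sum.inr i) ^ b

lemma gen_mem (n m : ℕ) (k : ℤ) (hk : k ≠ 0) :
    Φ n k (ι n (psum (Fin n) ℝ m)) ∈ Scal n :=
  Algebra.subset_adjoin ⟨k, hk, psum _ _ m, psum_isSymmetric _ _ m, rfl⟩

lemma phi_iota_psum (n m : ℕ) (k : ℤ) :
    Φ n k (ι n (psum (Fin n) ℝ m)) =
      ∑ i : Fin n, (X (Sum.inl i) + C (k:ℝ) * X (Sum.inr i)) ^ m := by
  simp [psum, ι, Φ, map_sum, map_pow]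

lemma expand (n m : ℕ) (c : ℝ) :
    ∑ i : Fin n, (X (Sum.inl i) + C c * X (Sum.inr i)) ^ m
      = ∑ j : Fin (m+1), ((m.choose (j:ℕ) : ℝ) * c ^ (m - (j:ℕ))) • PS n j (m - (j:ℕ)) := by
  have h1 : ∀ i : Fin n, (X (Sum.inl i) + C c * X (Sum.inr i)) ^ m
      = ∑ j ∈ Finset.range (m+1),
          ((m.choose j : ℝ) * c ^ (m - j)) • (X (Sum.inl i) ^ j * X (Sum.inr i) ^ (m-j)) := by
    intro i
    rw [add_pow]
    refine Finset.sum_congr rfl fun j hj => ?_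
    simp only [smul_eq_C_mul, C_mul, C_pow, mul_pow, C_eq_coe_nat]
    ring
  simp only [h1]
  rw [Finset.sum_comm,
    Fin.sum_univ_eq_sum_range (fun j => ((m.choose j : ℝ) * c ^ (m - j)) • PS n j (m - j)) (m+1)]
  refine Finset.sum_congr rfl fun j hj => ?_
  rw [PS, Finset.smul_sum]

lemma PS_mem (n : ℕ) (a b : ℕ) (h : 1 ≤ a + b) : PS n a b ∈ Scal n := by
  obtain ⟨m, hm⟩ : ∃ m, a + b = m := ⟨a + b, rfl⟩
  have ha : a < m + 1 := by omega
  have hb : b = m - a := by omega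
  subst hb
  set v : Fin (m+1) → ℝ := fun k => (k : ℝ) + 1 with hv
  set M : Matrix (Fin (m+1)) (Fin (m+1)) ℝ :=
    Matrix.of (fun k j => (m.choose (j:ℕ) : ℝ) * v k ^ (m - (j:ℕ))) with hM
  have hgen : ∀ k : Fin (m+1), ∑ j : Fin (m+1), M k j • PS n (j:ℕ) (m - (j:ℕ)) ∈ Scal n := by
    intro k
    have h0 : (((k:ℕ):ℤ)+1 : ℤ) ≠ 0 := by positivity
    have h2 := gen_mem n m (((k:ℕ):ℤ)+1) h0
    rw [phi_iota_psum, show (((((k:ℕ):ℤ)+1 : ℤ)) : ℝ) = v k by push_cast [hv]; ring,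
      expand] at h2
    exact h2
  have hdet : IsUnit M.det := by
    rw [isUnit_iff_ne_zero]
    have hMeq : M = (Matrix.vandermonde v).submatrix id Fin.revPerm
        * Matrix.diagonal (fun j : Fin (m+1) => (m.choose (j:ℕ) : ℝ)) := by
      ext k j
      simp only [hM, Matrix.mul_diagonal, Matrix.submatrix_apply, Matrix.vandermonde,
        Matrix.of_apply, Fin.revPerm_apply, Fin.val_rev, id]
      rw [mul_comm]
      congr 2
      omega
    rw [hMeq, Matrix.det_mul, Matrix.det_permute', Matrix.det_diagonal]
    have h1 : Matrix.det (Matrix.vandermonde v) ≠ 0 := by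
      rw [Matrix.det_vandermonde_ne_zero_iff]
      intro i j hij
      have : (i:ℝ) = (j:ℝ) := by
        have := hij
        simp only [hv] at this
        linarith
      exact_mod_cast Fin.val_injective (by exact_mod_cast this)
    have h2 : (∏ j : Fin (m+1), (m.choose (j:ℕ) : ℝ)) ≠ 0 := by
      rw [Finset.prod_ne_zero_iff]
      intro j _
      have : 0 < m.choose (j:ℕ) := Nat.choose_pos (by omega)
      positivity
    have h3 : ((Equiv.Perm.sign (Fin.revPerm : Equiv.Perm (Fin (m+1))) : ℤ) : ℝ) ≠ 0 := by
      rcases Int.units_eq_one_or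
          (Equiv.Perm.sign (Fin.revPerm : Equiv.Perm (Fin (m+1)))) with h'|h' <;>
        rw [h'] <;> norm_num
    exact mul_ne_zero (mul_ne_zero h3 h1) h2
  set a' : Fin (m+1) := ⟨a, ha⟩ with ha'
  have hkey : PS n a (m - a) = ∑ j : Fin (m+1), ((M⁻¹ * M) a' j) • PS n (j:ℕ) (m-(j:ℕ)) := by
    rw [Matrix.nonsing_inv_mul M hdet]
    simp [Matrix.one_apply, ha', Finset.sum_ite_eq, ite_smul]
  have hfin : PS n a (m-a)
      = ∑ k : Fin (m+1), (M⁻¹ a' k) • ∑ j : Fin (m+1), M k j • PS n (j:ℕ) (m-(j:ℕ)) := by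
    rw [hkey]
    simp only [Matrix.mul_apply, Finset.smul_sum, Finset.sum_smul, smul_smul]
    rw [Finset.sum_comm]
  rw [hfin]
  exact Subalgebra.sum_mem _ fun k _ => Subalgebra.smul_mem _ (hgen k) _

/-! ### Symmetrized monomials -/

noncomputable def SymM (n : ℕ) (v : Fin n → ℕ × ℕ) : MvPolynomial (Fin n ⊕ Fin n) ℝ :=
  ∑ σ : Equiv.Perm (Fin n), ∏ i : Fin n,
    X (Sum.inl (σ i)) ^ (v i).1 * X (Sum.inr (σ i)) ^ (v i).2

lemma symM_comp (n : ℕ) (v : Fin n → ℕ × ℕ) (τ : Equiv.Perm (Fin n)) :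
    SymM n (v ∘ τ) = SymM n v := by
  unfold SymM
  refine Fintype.sum_equiv (Equiv.mulRight τ⁻¹) _ _ fun σ => ?_
  refine Fintype.prod_equiv τ _ _ fun i => ?_
  simp [Equiv.Perm.mul_apply]

lemma prod_update (n a b : ℕ) (w : Fin n → ℕ × ℕ) (σ : Equiv.Perm (Fin n)) (i : Fin n)
    (u : Fin n → ℕ × ℕ) (hu : u = Function.update w i ((w i).1 + a, (w i).2 + b)) :
    (∏ k : Fin n, X (Sum.inl (σ k)) ^ (u k).1 * X (Sum.inr (σ k)) ^ (u k).2)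
      = X (Sum.inl (σ i)) ^ a * X (Sum.inr (σ i)) ^ b
        * ∏ k : Fin n, (X (Sum.inl (σ k)) ^ (w k).1 * X (Sum.inr (σ k)) ^ (w k).2
          : MvPolynomial (Fin n ⊕ Fin n) ℝ) := by
  rw [← Finset.mul_prod_erase Finset.univ _ (Finset.mem_univ i),
    ← Finset.mul_prod_erase Finset.univ
      (fun k => X (Sum.inl (σ k)) ^ (w k).1 * X (Sum.inr (σ k)) ^ (w k).2)
      (Finset.mem_univ i)]
  have h2 : ∏ k ∈ Finset.univ.erase i,
      (X (Sum.inl (σ k)) ^ (u k).1 * X (Sum.inr (σ k)) ^ (u k).2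
        : MvPolynomial (Fin n ⊕ Fin n) ℝ)
      = ∏ k ∈ Finset.univ.erase i,
        (X (Sum.inl (σ k)) ^ (w k).1 * X (Sum.inr (σ k)) ^ (w k).2) :=
    Finset.prod_congr rfl fun k hk => by
      rw [hu, Function.update_of_ne (Finset.ne_of_mem_erase hk)]
  rw [h2, hu, Function.update_self]
  simp only [pow_add]
  ring

lemma ps_mul_symM (n a b : ℕ) (w : Fin n → ℕ × ℕ) :
    PS n a b * SymM n w
      = ∑ i : Fin n, SymM n (Function.update w i ((w i).1 + a, (w i).2 + b)) := by
  have hthis : ∀ i : Fin n, SymM n (Function.update w i ((w i).1 + a, (w i).2 + b))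
      = ∑ σ : Equiv.Perm (Fin n), X (Sum.inl (σ i)) ^ a * X (Sum.inr (σ i)) ^ b
        * ∏ k : Fin n, X (Sum.inl (σ k)) ^ (w k).1 * X (Sum.inr (σ k)) ^ (w k).2 := by
    intro i
    unfold SymM
    exact Finset.sum_congr rfl fun σ _ => prod_update n a b w σ i _ rfl
  simp only [hthis]
  unfold SymM PS
  rw [Finset.sum_mul]
  simp only [Finset.mul_sum]
  rw [Finset.sum_comm]
  conv_rhs => rw [Finset.sum_comm]
  refine Finset.sum_congr rfl fun σ _ => ?_
  refine Fintype.sum_equiv σ.symm _ _ fun j => ?_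
  simp

lemma symM_mem (n : ℕ) (r : ℕ) : ∀ v : Fin n → ℕ × ℕ,
    (Finset.univ.filter fun i => v i ≠ (0,0)).card = r → SymM n v ∈ Scal n := by
  induction r using Nat.strong_induction_on with
  | _ r IH =>
    intro v hv
    rcases Nat.eq_zero_or_pos r with hr | hr
    · subst hr
      have hz : ∀ i, v i = (0,0) := by
        intro i
        by_contra hne
        have h1 : i ∈ Finset.univ.filter (fun i => v i ≠ (0,0)) :=
          Finset.mem_filter.mpr ⟨Finset.mem_univ i, hne⟩
        rw [Finset.card_eq_zero] at hv
        rw [hv] at h1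
        exact absurd h1 (Finset.notMem_empty i)
      have hS : SymM n v
          = (Fintype.card (Equiv.Perm (Fin n)) : MvPolynomial (Fin n ⊕ Fin n) ℝ) := by
        unfold SymM
        simp [hz]
      rw [hS]
      exact Subalgebra.natCast_mem _ _
    · have hne : (Finset.univ.filter fun i => v i ≠ (0,0)).Nonempty := by
        rw [← Finset.card_pos, hv]; exact hr
      obtain ⟨i0, hi0mem⟩ := hne
      have hi0 : v i0 ≠ (0,0) := by simpa using hi0mem
      set a := (v i0).1 with hadef
      set b := (v i0).2 with hbdef
      set w := Function.update v i0 ((0,0) : ℕ × ℕ) with hw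
      have hvi0 : v i0 = (a, b) := rfl
      have hab : 1 ≤ a + b := by
        by_contra hcon
        push_neg at hcon
        apply hi0
        rw [hvi0]
        have h1 : a = 0 := by omega
        have h2 : b = 0 := by omega
        rw [h1, h2]
      have hwcard : (Finset.univ.filter fun i => w i ≠ (0,0)).card = r - 1 := by
        have hfeq : (Finset.univ.filter fun i => w i ≠ (0,0))
            = (Finset.univ.filter fun i => v i ≠ (0,0)).erase i0 := by
          ext k
          simp only [Finset.mem_filter, Finset.mem_erase, Finset.mem_univ, true_and]
          constructor
          · intro hk
            rcases eq_or_ne k i0 with h|h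
            · subst h; simp [hw] at hk
            · rw [hw, Function.update_of_ne h] at hk; exact ⟨h, hk⟩
          · rintro ⟨h1, h2⟩
            rw [hw, Function.update_of_ne h1]; exact h2
        rw [hfeq, Finset.card_erase_of_mem hi0mem, hv]
      have hwmem : SymM n w ∈ Scal n := IH (r-1) (by omega) w hwcard
      set upd := fun i => Function.update w i ((w i).1 + a, (w i).2 + b) with hupd
      set A := Finset.univ.filter (fun i => i = i0 ∨ v i = (0,0)) with hA
      have hsplit : ∑ i : Fin n, SymM n (upd i)
          = ∑ i ∈ A, SymM n (upd i)
            + ∑ i ∈ Finset.univ.filter (fun i => ¬(i = i0 ∨ v i = (0,0))), SymM n (upd i) :=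
        (Finset.sum_filter_add_sum_filter_not _ _ _).symm
      have hAterm : ∀ i ∈ A, SymM n (upd i) = SymM n v := by
        intro i hi
        simp only [hA, Finset.mem_filter, Finset.mem_univ, true_and] at hi
        rcases hi with h|h
        · subst h
          congr 1
          funext k
          rcases eq_or_ne k i with hk|hk
          · subst hk
            simp only [hupd, Function.update_self, hw]
            rw [hvi0]
            simp
          · simp only [hupd, Function.update_of_ne hk, hw, Function.update_of_ne hk]
        · have hne' : i ≠ i0 := fun hh => hi0 (hh ▸ h)
          have hswap : upd i = v ∘ (Equiv.swap i i0) := by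
            funext k
            simp only [Function.comp_apply]
            rcases eq_or_ne k i with hk|hk
            · subst hk
              simp only [hupd, Function.update_self, hw, Function.update_of_ne hne',
                Equiv.swap_apply_left, h]
              rw [hvi0]
              simp
            · rcases eq_or_ne k i0 with hk0|hk0
              · subst hk0
                simp only [hupd, Function.update_of_ne (Ne.symm hne'), hw,
                  Function.update_self, Equiv.swap_apply_right, h]
              · simp only [hupd, Function.update_of_ne hk, hw, Function.update_of_ne hk0,
                  Equiv.swap_apply_of_ne_of_ne hk hk0]
          rw [hswap, symM_comp]
      have hArew : ∑ i ∈ A, SymM n (upd i) = (A.card : ℝ) • SymM n v := by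
        rw [Finset.sum_congr rfl hAterm, Finset.sum_const, ← Nat.cast_smul_eq_nsmul ℝ]
      have hBmem : ∀ i ∈ Finset.univ.filter (fun i => ¬(i = i0 ∨ v i = (0,0))),
          SymM n (upd i) ∈ Scal n := by
        intro i hi
        simp only [Finset.mem_filter, Finset.mem_univ, true_and, not_or] at hi
        obtain ⟨hii0, hvi⟩ := hi
        refine IH (r-1) (by omega) (upd i) ?_
        have hfeq : (Finset.univ.filter fun k => upd i k ≠ (0,0))
            = (Finset.univ.filter fun k => v k ≠ (0,0)).erase i0 := by
          ext k
          simp only [Finset.mem_filter, Finset.mem_erase, Finset.mem_univ, true_and]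
          rcases eq_or_ne k i with hk|hk
          · subst hk
            simp only [hupd, Function.update_self]
            constructor
            · intro _; exact ⟨hii0, hvi⟩
            · intro _ hcon
              rw [Prod.mk.injEq] at hcon
              omega
          · rcases eq_or_ne k i0 with hk0|hk0
            · subst hk0
              simp only [hupd, Function.update_of_ne (Ne.symm hii0), hw,
                Function.update_self]
              simp
            · simp only [hupd, Function.update_of_ne hk, hw, Function.update_of_ne hk0]
              constructor
              · intro h'; exact ⟨hk0, h'⟩
              · intro h'; exact h'.2
        rw [hfeq, Finset.card_erase_of_mem hi0mem, hv]
      have hAcard : A.card ≠ 0 :=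
        Finset.card_ne_zero_of_mem (show i0 ∈ A by simp [hA])
      have hPSmem : PS n a b ∈ Scal n := PS_mem n a b hab
      have hkey : PS n a b * SymM n w = ∑ i : Fin n, SymM n (upd i) := by
        rw [ps_mul_symM n a b w]
      have hsum : (A.card : ℝ) • SymM n v
          = PS n a b * SymM n w
            - ∑ i ∈ Finset.univ.filter (fun i => ¬(i = i0 ∨ v i = (0,0))), SymM n (upd i) := by
        rw [hkey, hsplit, hArew]
        ring
      have hmem2 : (A.card : ℝ) • SymM n v ∈ Scal n := by
        rw [hsum]
        exact Subalgebra.sub_mem _ (Subalgebra.mul_mem _ hPSmem hwmem)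
          (Subalgebra.sum_mem _ hBmem)
      have hfin : SymM n v = ((A.card : ℝ))⁻¹ • ((A.card : ℝ) • SymM n v) := by
        rw [smul_smul, inv_mul_cancel₀ (by exact_mod_cast hAcard), one_smul]
      rw [hfin]
      exact Subalgebra.smul_mem _ hmem2 _

lemma rename_monomial_eq (n : ℕ) (σ : Equiv.Perm (Fin n)) (d : (Fin n ⊕ Fin n) →₀ ℕ) (c : ℝ) :
    rename (Sum.map σ σ) (monomial d c)
      = C c * ∏ i : Fin n,
          X (Sum.inl (σ i)) ^ (d (Sum.inl i)) * X (Sum.inr (σ i)) ^ (d (Sum.inr i)) := by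
  rw [monomial_eq, Finsupp.prod_fintype _ _ (fun s => pow_zero _), map_mul, rename_C, map_prod]
  simp only [map_pow, rename_X]
  congr 1
  rw [Fintype.prod_sum_type, ← Finset.prod_mul_distrib]
  simp

lemma sum_rename_monomial (n : ℕ) (d : (Fin n ⊕ Fin n) →₀ ℕ) (c : ℝ) :
    ∑ σ : Equiv.Perm (Fin n), rename (Sum.map σ σ) (monomial d c)
      = C c * SymM n (fun i => (d (Sum.inl i), d (Sum.inr i))) := by
  unfold SymM
  rw [Finset.mul_sum]
  exact Finset.sum_congr rfl fun σ _ => rename_monomial_eq n σ d c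


/-- every polynomial `f ∈ R` invariant under the diagonal `S_n`-action
lies in `𝒮 + J̃`. -/
theorem stmt5 (n : ℕ) (hn : 1 ≤ n) (f : MvPolynomial (Fin n ⊕ Fin n) ℝ)
    (hf : ∀ σ : Equiv.Perm (Fin n), rename (Sum.map σ σ) f = f) :
    ∃ s ∈ Scal n, ∃ h ∈ Jtilde n, f = s + h := by
  refine ⟨f, ?_, 0, (Jtilde n).zero_mem, by ring⟩
  have hcard : (0:ℝ) < (Fintype.card (Equiv.Perm (Fin n)) : ℝ) := by
    have := Fintype.card_pos (α := Equiv.Perm (Fin n))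
    exact_mod_cast this
  have h1 : (Fintype.card (Equiv.Perm (Fin n)) : ℝ) • f
      = ∑ σ : Equiv.Perm (Fin n), rename (Sum.map σ σ) f := by
    rw [Finset.sum_congr rfl (fun σ _ => hf σ), Finset.sum_const, Finset.card_univ,
      ← Nat.cast_smul_eq_nsmul ℝ]
  have h3 : ∑ σ : Equiv.Perm (Fin n), rename (Sum.map σ σ) f
      = ∑ d ∈ f.support, C (coeff d f) * SymM n (fun i => (d (Sum.inl i), d (Sum.inr i))) := by
    calc ∑ σ : Equiv.Perm (Fin n), rename (Sum.map σ σ) f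
        = ∑ σ : Equiv.Perm (Fin n), ∑ d ∈ f.support,
            rename (Sum.map σ σ) (monomial d (coeff d f)) := by
          refine Finset.sum_congr rfl fun σ _ => ?_
          conv_lhs => rw [f.as_sum]
          rw [map_sum]
      _ = ∑ d ∈ f.support, ∑ σ : Equiv.Perm (Fin n),
            rename (Sum.map σ σ) (monomial d (coeff d f)) := Finset.sum_comm
      _ = _ := Finset.sum_congr rfl fun d _ => sum_rename_monomial n d (coeff d f)
  have h2 : ∑ σ : Equiv.Perm (Fin n), rename (Sum.map σ σ) f ∈ Scal n := by
    rw [h3]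
    refine Subalgebra.sum_mem _ fun d _ => ?_
    rw [← smul_eq_C_mul]
    exact Subalgebra.smul_mem _ (symM_mem n _ _ rfl) _
  have hfi : f = ((Fintype.card (Equiv.Perm (Fin n)) : ℝ))⁻¹
      • ((Fintype.card (Equiv.Perm (Fin n)) : ℝ) • f) := by
    rw [smul_smul, inv_mul_cancel₀ (ne_of_gt hcard), one_smul]
  rw [hfi, h1]
  exact Subalgebra.smul_mem _ h2 _
end

section
/- Every signed multisymmetric polynomial f ∈ R can be written in the form f = c_0 + Σ_{k=1}^m c_k · μ(x^{I_k} y^{J_k}), where c_0, c_1, …, c_m ∈ ℝ and every pair of multi-indices (I_k, J_k) is even. -/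
open MvPolynomial

/-- The action of a signed permutation `(ε, σ)` on `R = ℝ[x_1,…,x_n,y_1,…,y_n]`:
`x_i ↦ ε_i x_{σ(i)}`, `y_i ↦ ε_i y_{σ(i)}` (`x_i = X (Sum.inl i)`, `y_i = X (Sum.inr i)`). -/
noncomputable def sAct (n : ℕ) (ε : Fin n → ℤˣ) (σ : Equiv.Perm (Fin n)) :
    MvPolynomial (Fin n ⊕ Fin n) ℝ →ₐ[ℝ] MvPolynomial (Fin n ⊕ Fin n) ℝ :=
  aeval (Sum.elim (fun i => C ((ε i : ℤ) : ℝ) * X (Sum.inl (σ i)))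
                  (fun i => C ((ε i : ℤ) : ℝ) * X (Sum.inr (σ i))))

/-- The symmetrization operator `μ`: the average over all `2^n·n!` signed permutations. -/
noncomputable def μop (n : ℕ) (f : MvPolynomial (Fin n ⊕ Fin n) ℝ) :
    MvPolynomial (Fin n ⊕ Fin n) ℝ :=
  (((2 ^ n * n.factorial : ℕ) : ℝ))⁻¹ •
    ∑ p : (Fin n → ℤˣ) × Equiv.Perm (Fin n), sAct n p.1 p.2 f

/-- The monomial `x^I y^J = x_1^{i_1}⋯x_n^{i_n}·y_1^{j_1}⋯y_n^{j_n}`. -/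
noncomputable def monXY (n : ℕ) (I J : Fin n → ℕ) : MvPolynomial (Fin n ⊕ Fin n) ℝ :=
  (∏ i : Fin n, X (Sum.inl i) ^ I i) * ∏ i : Fin n, X (Sum.inr i) ^ J i

lemma monomial_eq_fintype (n : ℕ) (d : (Fin n ⊕ Fin n) →₀ ℕ) (c : ℝ) :
    (monomial d c : MvPolynomial (Fin n ⊕ Fin n) ℝ) = C c * ∏ s, X s ^ d s := by
  rw [monomial_eq]
  congr 1
  exact Finsupp.prod_fintype _ _ (fun s => pow_zero _)

lemma monXY_eq (n : ℕ) (d : (Fin n ⊕ Fin n) →₀ ℕ) :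
    monXY n (fun i => d (Sum.inl i)) (fun i => d (Sum.inr i)) = monomial d 1 := by
  rw [monomial_eq_fintype, map_one, one_mul, Fintype.prod_sum_type, monXY]

lemma sAct_one_monomial (n : ℕ) (ε : Fin n → ℤˣ) (d : (Fin n ⊕ Fin n) →₀ ℕ) (c : ℝ) :
    sAct n ε 1 (monomial d c) =
      monomial d (c * ∏ j : Fin n,
        ((ε j : ℤ) : ℝ) ^ (d (Sum.inl j) + d (Sum.inr j))) := by
  rw [monomial_eq_fintype, monomial_eq_fintype, map_mul, map_prod]
  have hC : ∀ c' : ℝ, sAct n ε 1 (C c') = C c' := fun c' => by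
    simp [sAct, algHom_C]
  rw [hC]
  have hX : ∀ s : Fin n ⊕ Fin n, sAct n ε 1 (X s ^ d s)
      = (C ((ε (Sum.elim id id s) : ℤ) : ℝ)) ^ d s * X s ^ d s := by
    rintro (i | i) <;> simp [sAct, mul_pow]
  simp_rw [hX]
  rw [Finset.prod_mul_distrib]
  have : (∏ s : Fin n ⊕ Fin n, (C ((ε (Sum.elim id id s) : ℤ) : ℝ) :
      MvPolynomial (Fin n ⊕ Fin n) ℝ) ^ d s)
      = C (∏ j : Fin n, ((ε j : ℤ) : ℝ) ^ (d (Sum.inl j) + d (Sum.inr j))) := by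
    rw [Fintype.prod_sum_type]
    simp [← Finset.prod_mul_distrib, ← pow_add, map_prod, map_pow]
  rw [this, map_mul, mul_assoc]

lemma coeff_sAct_one (n : ℕ) (ε : Fin n → ℤˣ)
    (f : MvPolynomial (Fin n ⊕ Fin n) ℝ) (d : (Fin n ⊕ Fin n) →₀ ℕ) :
    coeff d (sAct n ε 1 f)
      = (∏ j : Fin n, ((ε j : ℤ) : ℝ) ^ (d (Sum.inl j) + d (Sum.inr j))) * coeff d f := by
  conv_lhs => rw [f.as_sum, map_sum]
  simp_rw [sAct_one_monomial, coeff_sum, coeff_monomial]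
  rw [Finset.sum_ite_eq' f.support d]
  by_cases hd : d ∈ f.support
  · rw [if_pos hd, mul_comm]
  · rw [if_neg hd, MvPolynomial.notMem_support_iff.mp hd, mul_zero]

lemma coeff_zero_of_odd (n : ℕ) (f : MvPolynomial (Fin n ⊕ Fin n) ℝ)
    (hf : ∀ (ε : Fin n → ℤˣ) (σ : Equiv.Perm (Fin n)), sAct n ε σ f = f)
    (d : (Fin n ⊕ Fin n) →₀ ℕ) (i0 : Fin n)
    (hodd : ¬ Even (d (Sum.inl i0) + d (Sum.inr i0))) : coeff d f = 0 := by
  set ε : Fin n → ℤˣ := fun j => if j = i0 then -1 else 1 with hε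
  have h := congrArg (coeff d) (hf ε 1)
  rw [coeff_sAct_one] at h
  have hprod : (∏ j : Fin n, ((ε j : ℤ) : ℝ) ^ (d (Sum.inl j) + d (Sum.inr j))) = -1 := by
    rw [Finset.prod_eq_single i0]
    · simp [hε, Odd.neg_one_pow (Nat.not_even_iff_odd.mp hodd)]
    · intro b _ hb; simp [hε, hb]
    · simp
  rw [hprod] at h
  linarith

lemma card_group (n : ℕ) :
    Fintype.card ((Fin n → ℤˣ) × Equiv.Perm (Fin n)) = 2 ^ n * n.factorial := by
  simp [Fintype.card_prod, Fintype.card_fun, Fintype.card_perm]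

lemma μop_fixed (n : ℕ) (f : MvPolynomial (Fin n ⊕ Fin n) ℝ)
    (hf : ∀ (ε : Fin n → ℤˣ) (σ : Equiv.Perm (Fin n)), sAct n ε σ f = f) :
    μop n f = f := by
  unfold μop
  have : ∀ p : (Fin n → ℤˣ) × Equiv.Perm (Fin n), sAct n p.1 p.2 f = f :=
    fun p => hf p.1 p.2
  simp_rw [this]
  rw [Finset.sum_const, Finset.card_univ, card_group, ← Nat.cast_smul_eq_nsmul ℝ, smul_smul,
    inv_mul_cancel₀, one_smul]
  positivity

lemma μop_C_mul (n : ℕ) (c : ℝ) (g : MvPolynomial (Fin n ⊕ Fin n) ℝ) :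
    μop n (C c * g) = C c * μop n g := by
  unfold μop
  have : ∀ p : (Fin n → ℤˣ) × Equiv.Perm (Fin n),
      sAct n p.1 p.2 (C c * g) = C c * sAct n p.1 p.2 g := by
    intro p; rw [map_mul]; simp [algHom_C, algebraMap_eq]
  simp_rw [this, ← Finset.mul_sum, mul_smul_comm]

lemma μop_sum {α : Type*} (n : ℕ) (S : Finset α) (g : α → MvPolynomial (Fin n ⊕ Fin n) ℝ) :
    μop n (∑ a ∈ S, g a) = ∑ a ∈ S, μop n (g a) := by
  unfold μop
  simp_rw [map_sum, Finset.smul_sum]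
  rw [Finset.sum_comm]

/-- every signed multisymmetric polynomial `f` can be written as
`f = c₀ + ∑_{k=1}^m c_k·μ(x^{I_k} y^{J_k})` with every `(I_k, J_k)` even. -/
theorem stmt10 (n : ℕ) (hn : 1 ≤ n) (f : MvPolynomial (Fin n ⊕ Fin n) ℝ)
    (hf : ∀ (ε : Fin n → ℤˣ) (σ : Equiv.Perm (Fin n)), sAct n ε σ f = f) :
    ∃ (m : ℕ) (c₀ : ℝ) (c : Fin m → ℝ) (I J : Fin m → Fin n → ℕ),
      (∀ (k : Fin m) (i : Fin n), Even (I k i + J k i)) ∧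
      f = C c₀ + ∑ k : Fin m, C (c k) * μop n (monXY n (I k) (J k)) := by
  classical
  set S := f.support with hS
  let e : Fin S.card ≃ S := S.equivFin.symm
  refine ⟨S.card, 0, fun k => coeff (e k : (Fin n ⊕ Fin n) →₀ ℕ) f,
    fun k i => (e k : (Fin n ⊕ Fin n) →₀ ℕ) (Sum.inl i),
    fun k i => (e k : (Fin n ⊕ Fin n) →₀ ℕ) (Sum.inr i), ?_, ?_⟩
  · intro k i
    by_contra h
    exact (MvPolynomial.mem_support_iff.mp (e k).2) (coeff_zero_of_odd n f hf (e k) i h)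
  · rw [map_zero, zero_add]
    have step : ∀ k : Fin S.card,
        C (coeff (e k : (Fin n ⊕ Fin n) →₀ ℕ) f) *
          μop n (monXY n (fun i => (e k : (Fin n ⊕ Fin n) →₀ ℕ) (Sum.inl i))
            (fun i => (e k : (Fin n ⊕ Fin n) →₀ ℕ) (Sum.inr i)))
        = μop n (monomial (e k : (Fin n ⊕ Fin n) →₀ ℕ)
            (coeff (e k : (Fin n ⊕ Fin n) →₀ ℕ) f)) := by
      intro k
      rw [monXY_eq, ← μop_C_mul, C_mul_monomial, mul_one]
    simp_rw [step]
    rw [Equiv.sum_comp e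
      (fun d : S => μop n (monomial (d : (Fin n ⊕ Fin n) →₀ ℕ) (coeff d f)))]
    rw [Finset.sum_coe_sort S (fun d => μop n (monomial d (coeff d f)))]
    rw [← μop_sum]
    rw [← f.as_sum, μop_fixed n f hf]
end

section
/- The subring of R consisting of all signed multisymmetric polynomials is generated as an ℝ-algebra by the set {P_{a,b} : a, b ≥ 0 and a + b even}. -/
open MvPolynomial

open Finset Function Sum

/-- The monomial `x_j^{v.1} y_j^{v.2}`. -/
noncomputable def mono (n : ℕ) (v : ℕ × ℕ) (j : Fin n) : MvPolynomial (Fin n ⊕ Fin n) ℝ :=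
  X (Sum.inl j) ^ v.1 * X (Sum.inr j) ^ v.2

lemma mono_add (n : ℕ) (v w : ℕ × ℕ) (j : Fin n) :
    mono n (v + w) j = mono n v j * mono n w j := by
  simp only [mono, Prod.fst_add, Prod.snd_add, pow_add]; ring

lemma P_eq_sum_mono (n a b : ℕ) : P n a b = ∑ j : Fin n, mono n (a, b) j := rfl

/-- Sum over injective maps `Fin k → Fin n` of the product of monomials. -/
noncomputable def Isum (n k : ℕ) (q : Fin k → ℕ × ℕ) : MvPolynomial (Fin n ⊕ Fin n) ℝ :=
  ∑ φ : Fin k → Fin n,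
    if Function.Injective φ then ∏ i, mono n (q i) (φ i) else 0

/-- The generated subalgebra. -/
noncomputable def A (n : ℕ) : Subalgebra ℝ (MvPolynomial (Fin n ⊕ Fin n) ℝ) :=
  Algebra.adjoin ℝ {p | ∃ a b : ℕ, Even (a + b) ∧ p = P n a b}

lemma P_mem (n a b : ℕ) (h : Even (a + b)) : P n a b ∈ A n :=
  Algebra.subset_adjoin ⟨a, b, h, rfl⟩

lemma isum_cons (n k : ℕ) (v : ℕ × ℕ) (q : Fin k → ℕ × ℕ) :
    (∑ j : Fin n, mono n v j) * Isum n k q =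
      Isum n (k + 1) (Fin.cons v q) +
        ∑ t : Fin k, Isum n k (Function.update q t (v + q t)) := by
  have hre : Isum n (k + 1) (Fin.cons v q) =
      ∑ ψ : Fin k → Fin n, ∑ j : Fin n,
        if Function.Injective (Fin.cons j ψ : Fin (k+1) → Fin n) then
          mono n v j * ∏ i, mono n (q i) (ψ i) else 0 := by
    rw [Isum, ← Equiv.sum_comp (Fin.consEquiv (fun _ : Fin (k+1) => Fin n))]
    rw [Fintype.sum_prod_type]
    rw [Finset.sum_comm]
    refine Finset.sum_congr rfl fun ψ _ => Finset.sum_congr rfl fun j _ => ?_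
    have : (Fin.consEquiv (fun _ : Fin (k+1) => Fin n)) (j, ψ) = Fin.cons j ψ := rfl
    rw [this]
    congr 1
    rw [Fin.prod_univ_succ]
    simp [Fin.cons_zero, Fin.cons_succ]
  rw [hre, Isum, Finset.mul_sum]
  have hupd : ∀ t : Fin k, Isum n k (Function.update q t (v + q t)) =
      ∑ ψ : Fin k → Fin n, if Function.Injective ψ then
        mono n v (ψ t) * ∏ i, mono n (q i) (ψ i) else 0 := by
    intro t
    rw [Isum]
    refine Finset.sum_congr rfl fun ψ _ => ?_
    by_cases h : Function.Injective ψ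
    · rw [if_pos h, if_pos h]
      rw [← Finset.mul_prod_erase univ (fun i => mono n (Function.update q t (v + q t) i) (ψ i))
        (Finset.mem_univ t)]
      rw [← Finset.mul_prod_erase univ (fun i => mono n (q i) (ψ i)) (Finset.mem_univ t)]
      simp only [Function.update_self]
      rw [mono_add]
      rw [Finset.prod_congr rfl (fun i hi => by
        rw [Function.update_of_ne (Finset.ne_of_mem_erase hi)])]
      ring
    · rw [if_neg h, if_neg h]
  simp only [hupd]
  rw [Finset.sum_comm (γ := Fin k)]
  rw [← Finset.sum_add_distrib]
  refine Finset.sum_congr rfl fun ψ _ => ?_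
  by_cases h : Function.Injective ψ
  · have hcons : ∀ j : Fin n,
        (Function.Injective (Fin.cons j ψ : Fin (k+1) → Fin n)) ↔ j ∉ Set.range ψ := by
      intro j
      rw [Fin.cons_injective_iff]
      simp [h]
    rw [if_pos h, Finset.sum_mul]
    have step1 : ∀ j : Fin n,
        (if Function.Injective (Fin.cons j ψ : Fin (k+1) → Fin n) then
          mono n v j * ∏ i, mono n (q i) (ψ i) else 0) =
        (if j ∉ Set.range ψ then mono n v j * ∏ i, mono n (q i) (ψ i) else 0) := by
      intro j
      by_cases hj : j ∉ Set.range ψ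
      · rw [if_pos ((hcons j).mpr hj), if_pos hj]
      · rw [if_neg (fun hc => hj ((hcons j).mp hc)), if_neg hj]
    simp only [step1, if_pos h]
    -- now:  ∑ j, m j = ∑ j, ite (j ∉ range ψ) (m j) 0 + ∑ t, m (ψ t)
    set m : Fin n → MvPolynomial (Fin n ⊕ Fin n) ℝ :=
      fun j => mono n v j * ∏ i, mono n (q i) (ψ i) with hm
    have h2 : (∑ t : Fin k, m (ψ t)) = ∑ j ∈ Finset.univ.image ψ, m j := by
      rw [Finset.sum_image (fun a _ b _ hab => h hab)]
    have h3 : (∑ j : Fin n, if j ∉ Set.range ψ then m j else 0) =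
        ∑ j ∈ Finset.univ.filter (fun j => j ∉ Set.range ψ), m j := by
      rw [Finset.sum_filter]
    have h4 : (Finset.univ.filter (fun j : Fin n => ¬ j ∉ Set.range ψ)) =
        Finset.univ.image ψ := by
      ext j; simp [Set.mem_range]
    rw [h3, h2, ← h4, Finset.sum_filter_add_sum_filter_not Finset.univ
      (fun j => j ∉ Set.range ψ) m]
  · have hcons : ∀ j : Fin n, ¬ Function.Injective (Fin.cons j ψ : Fin (k+1) → Fin n) :=
      fun j hc => h (Fin.cons_injective_iff.mp hc).2
    simp [h, hcons]

lemma isum_mem (n : ℕ) : ∀ (k : ℕ) (q : Fin k → ℕ × ℕ),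
    (∀ i, Even ((q i).1 + (q i).2)) → Isum n k q ∈ A n := by
  intro k
  induction k with
  | zero =>
    intro q _
    have : Isum n 0 q = 1 := by
      rw [Isum, Fintype.sum_unique]
      rw [if_pos (Function.injective_of_subsingleton _)]
      simp
    rw [this]; exact one_mem _
  | succ k ih =>
    intro q hq
    have hrec := isum_cons n k (q 0) (Fin.tail q)
    rw [Fin.cons_self_tail q] at hrec
    have hP : (∑ j : Fin n, mono n (q 0) j) ∈ A n := by
      rw [← P_eq_sum_mono]; exact P_mem n _ _ (hq 0)
    have hI : Isum n k (Fin.tail q) ∈ A n := ih _ (fun i => hq i.succ)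
    have hS : (∑ t : Fin k, Isum n k (Function.update (Fin.tail q) t (q 0 + Fin.tail q t)))
        ∈ A n := by
      refine Subalgebra.sum_mem _ fun t _ => ih _ fun i => ?_
      by_cases hit : i = t
      · subst hit
        rw [Function.update_self]
        have : (q 0 + Fin.tail q i).1 + (q 0 + Fin.tail q i).2 =
            ((q 0).1 + (q 0).2) + ((Fin.tail q i).1 + (Fin.tail q i).2) := by
          simp [Prod.fst_add, Prod.snd_add]; ring
        rw [this]
        exact (hq 0).add (hq i.succ)
      · rw [Function.update_of_ne hit]
        exact hq i.succ
    have : Isum n (k + 1) q =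
        (∑ j : Fin n, mono n (q 0) j) * Isum n k (Fin.tail q) -
          ∑ t : Fin k, Isum n k (Function.update (Fin.tail q) t (q 0 + Fin.tail q t)) :=
      eq_sub_of_add_eq hrec.symm
    rw [this]
    exact sub_mem (mul_mem hP hI) hS

lemma sAct_monomial (n : ℕ) (ε : Fin n → ℤˣ) (σ : Equiv.Perm (Fin n))
    (d : (Fin n ⊕ Fin n) →₀ ℕ) (c : ℝ) :
    sAct n ε σ (monomial d c) =
      C (∏ i, ((ε i : ℤ) : ℝ) ^ (d (Sum.inl i) + d (Sum.inr i))) *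
        (C c * ∏ i, mono n (d (Sum.inl i), d (Sum.inr i)) (σ i)) := by
  rw [sAct, aeval_monomial, Finsupp.prod_fintype _ _ (fun v => pow_zero _),
    Fintype.prod_sum_type]
  simp only [Sum.elim_inl, Sum.elim_inr, mul_pow, mono, Finset.prod_mul_distrib,
    ← map_pow (C : ℝ →+* MvPolynomial (Fin n ⊕ Fin n) ℝ),
    ← map_prod (C : ℝ →+* MvPolynomial (Fin n ⊕ Fin n) ℝ), pow_add, map_mul]
  rw [MvPolynomial.algebraMap_eq]
  ring

lemma sum_perm_eq_isum (n : ℕ) (q : Fin n → ℕ × ℕ) :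
    (∑ σ : Equiv.Perm (Fin n), ∏ i, mono n (q i) (σ i)) = Isum n n q := by
  rw [Isum, ← Finset.sum_filter]
  refine Finset.sum_bij (fun σ _ => ⇑σ) ?_ ?_ ?_ ?_
  · intro σ _
    exact Finset.mem_filter.mpr ⟨Finset.mem_univ _, σ.injective⟩
  · intro σ1 _ σ2 _ hcoe
    exact Equiv.coe_fn_injective hcoe
  · intro φ hφ
    have hinj : Function.Injective φ := (Finset.mem_filter.mp hφ).2
    exact ⟨Equiv.ofBijective φ (Finite.injective_iff_bijective.mp hinj), Finset.mem_univ _, rfl⟩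
  · intro σ _; rfl

lemma sum_sAct_mem (n : ℕ) (f : MvPolynomial (Fin n ⊕ Fin n) ℝ) :
    (∑ ε : Fin n → ℤˣ, ∑ σ : Equiv.Perm (Fin n), sAct n ε σ f) ∈ A n := by
  induction f using MvPolynomial.induction_on' with
  | add p q hp hq =>
    simp only [map_add, Finset.sum_add_distrib]
    exact add_mem hp hq
  | monomial d c =>
    simp only [sAct_monomial]
    rw [← Finset.sum_mul_sum Finset.univ Finset.univ
      (fun ε : Fin n → ℤˣ => C (∏ i, ((ε i : ℤ) : ℝ) ^ (d (Sum.inl i) + d (Sum.inr i))))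
      (fun σ : Equiv.Perm (Fin n) => C c * ∏ i, mono n (d (Sum.inl i), d (Sum.inr i)) (σ i))]
    rw [← map_sum (C : ℝ →+* MvPolynomial (Fin n ⊕ Fin n) ℝ)]
    have hsum : (∑ ε : Fin n → ℤˣ, ∏ i, ((ε i : ℤ) : ℝ) ^ (d (Sum.inl i) + d (Sum.inr i))) =
        ∏ i : Fin n, ∑ u : ℤˣ, ((u : ℤ) : ℝ) ^ (d (Sum.inl i) + d (Sum.inr i)) := by
      rw [← Fintype.piFinset_univ]
      exact Finset.sum_prod_piFinset Finset.univ
        (fun i (u : ℤˣ) => ((u : ℤ) : ℝ) ^ (d (Sum.inl i) + d (Sum.inr i)))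
    rw [hsum]
    by_cases h : ∀ i : Fin n, Even (d (Sum.inl i) + d (Sum.inr i))
    · rw [← smul_eq_C_mul]
      refine Subalgebra.smul_mem _ ?_ _
      rw [← Finset.mul_sum, ← smul_eq_C_mul]
      refine Subalgebra.smul_mem _ ?_ _
      rw [sum_perm_eq_isum]
      exact isum_mem n n _ (fun i => h i)
    · push_neg at h
      obtain ⟨i, hi⟩ := h
      have hzero : (∑ u : ℤˣ, ((u : ℤ) : ℝ) ^ (d (Sum.inl i) + d (Sum.inr i))) = 0 := by
        rw [UnitsInt.univ]
        rw [Finset.sum_insert (by decide), Finset.sum_singleton]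
        have hodd : Odd (d (Sum.inl i) + d (Sum.inr i)) := Nat.not_even_iff_odd.mp hi
        simp [hodd.neg_one_pow]
      rw [Finset.prod_eq_zero (Finset.mem_univ i) hzero, map_zero, zero_mul]
      exact zero_mem _

lemma sAct_P (n : ℕ) (ε : Fin n → ℤˣ) (σ : Equiv.Perm (Fin n)) (a b : ℕ)
    (h : Even (a + b)) : sAct n ε σ (P n a b) = P n a b := by
  have key : ∀ i : Fin n,
      (sAct n ε σ) (X (Sum.inl i) ^ a * X (Sum.inr i) ^ b) =
        X (Sum.inl (σ i)) ^ a * X (Sum.inr (σ i)) ^ b := by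
    intro i
    rw [sAct]
    simp only [map_mul, map_pow, aeval_X, Sum.elim_inl, Sum.elim_inr]
    have hsq : ((ε i : ℤ) : ℝ) ^ 2 = 1 := by
      have h2 : ((ε i : ℤ)) ^ 2 = 1 := by
        rw [← Units.val_pow_eq_pow_val, Int.units_sq, Units.val_one]
      rw [← Int.cast_pow, h2, Int.cast_one]
    obtain ⟨m, hm⟩ := h
    have hpow : ((ε i : ℤ) : ℝ) ^ a * ((ε i : ℤ) : ℝ) ^ b = 1 := by
      rw [← pow_add, hm, ← two_mul, pow_mul, hsq, one_pow]
    calc (C ((ε i : ℤ) : ℝ) * X (inl (σ i))) ^ a * (C ((ε i : ℤ) : ℝ) * X (inr (σ i))) ^ b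
        = C (((ε i : ℤ) : ℝ) ^ a * ((ε i : ℤ) : ℝ) ^ b) *
            (X (inl (σ i)) ^ a * X (inr (σ i)) ^ b) := by
          rw [mul_pow, mul_pow, map_mul, map_pow, map_pow]; ring
      _ = X (inl (σ i)) ^ a * X (inr (σ i)) ^ b := by rw [hpow, map_one, one_mul]
  rw [P, map_sum, Finset.sum_congr rfl (fun i _ => key i)]
  exact Equiv.sum_comp σ (fun j => X (inl j) ^ a * X (inr j) ^ b)

/-- the subring of signed multisymmetric polynomials is generated as an
ℝ-algebra by `{P_{a,b} : a, b ≥ 0, a + b even}`; i.e. a polynomial is signed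
multisymmetric iff it lies in the ℝ-subalgebra generated by that set. -/
theorem stmt11 (n : ℕ) (hn : 1 ≤ n) (f : MvPolynomial (Fin n ⊕ Fin n) ℝ) :
    (∀ (ε : Fin n → ℤˣ) (σ : Equiv.Perm (Fin n)), sAct n ε σ f = f) ↔
    f ∈ Algebra.adjoin ℝ {p | ∃ a b : ℕ, Even (a + b) ∧ p = P n a b} := by
  constructor
  · intro h
    have key := sum_sAct_mem n f
    set N : ℕ := Fintype.card (Fin n → ℤˣ) * Fintype.card (Equiv.Perm (Fin n)) with hN
    have hsum : (∑ ε : Fin n → ℤˣ, ∑ σ : Equiv.Perm (Fin n), sAct n ε σ f) = (N : ℝ) • f := by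
      simp only [h, Finset.sum_const, Finset.card_univ, smul_smul]
      rw [Nat.cast_smul_eq_nsmul, hN]
    rw [hsum] at key
    have hN0 : (N : ℝ) ≠ 0 := by
      have : N ≠ 0 := Nat.mul_ne_zero Fintype.card_ne_zero Fintype.card_ne_zero
      exact_mod_cast this
    have key2 := (A n).smul_mem key ((N : ℝ)⁻¹)
    rwa [smul_smul, inv_mul_cancel₀ hN0, one_smul] at key2
  · intro hf ε σ
    refine Algebra.adjoin_induction (fun x hx => ?_) (fun r => ?_)
      (fun x y _ _ hx hy => ?_) (fun x y _ _ hx hy => ?_) hf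
    · obtain ⟨a, b, hab, rfl⟩ := hx
      exact sAct_P n ε σ a b hab
    · exact (sAct n ε σ).commutes r
    · rw [map_add, hx, hy]
    · rw [map_mul, hx, hy]
end
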